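/- (Sz.-Nagy) Let T be a bounded invertible operator on a Hilbert space (H, h₀) that is uniformly bounded: ‖Tᵏ‖ ≤ c for all integers k (positive and negative). Then there exists a bounded self-adjoint operator Q with (1/c)·I ≤ Q ≤ c·I such that QTQ⁻¹ is unitary; equivalently, T is unitary with respect to the inner product h_T(x,y) := h₀(Qx, Qy). -/

import Mathlib

open Filter Finset ContinuousLinearMap InnerProductSpace
open scoped Topology ComplexConjugate

namespace SzNagyAux

variable {H : Type*} [NormedAddCommGroup H] [InnerProductSpace ℂ H] [CompleteSpace H]

/-- The sequence `n ↦ ⟪Tⁿ x, Tⁿ y⟫`. -/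
noncomputable def szA (T : (H →L[ℂ] H)ˣ) (x y : H) (n : ℕ) : ℂ :=
  inner ℂ (((T ^ (n : ℤ) : (H →L[ℂ] H)ˣ) : H →L[ℂ] H) x)
    (((T ^ (n : ℤ) : (H →L[ℂ] H)ˣ) : H →L[ℂ] H) y)

/-- Cesàro averages of `szA`. -/
noncomputable def szB (T : (H →L[ℂ] H)ˣ) (x y : H) (N : ℕ) : ℂ :=
  (N : ℝ)⁻¹ • ∑ n ∈ Finset.range N, szA T x y n

lemma szA_add_left (T : (H →L[ℂ] H)ˣ) (x x' y : H) (n : ℕ) :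
    szA T (x + x') y n = szA T x y n + szA T x' y n := by
  simp [szA, inner_add_left]

lemma szA_smul_left (T : (H →L[ℂ] H)ˣ) (r : ℂ) (x y : H) (n : ℕ) :
    szA T (r • x) y n = conj r * szA T x y n := by
  simp [szA, inner_smul_left, mul_comm]

lemma szA_add_right (T : (H →L[ℂ] H)ˣ) (x y y' : H) (n : ℕ) :
    szA T x (y + y') n = szA T x y n + szA T x y' n := by
  simp [szA, inner_add_right]

lemma szA_smul_right (T : (H →L[ℂ] H)ˣ) (r : ℂ) (x y : H) (n : ℕ) :
    szA T x (r • y) n = r * szA T x y n := by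
  simp [szA, inner_smul_right]

lemma szA_conj (T : (H →L[ℂ] H)ˣ) (x y : H) (n : ℕ) :
    conj (szA T x y n) = szA T y x n := by
  simp [szA, inner_conj_symm]

lemma szB_add_left (T : (H →L[ℂ] H)ˣ) (x x' y : H) (N : ℕ) :
    szB T (x + x') y N = szB T x y N + szB T x' y N := by
  simp [szB, szA_add_left, Finset.sum_add_distrib, smul_add]

lemma szB_smul_left (T : (H →L[ℂ] H)ˣ) (r : ℂ) (x y : H) (N : ℕ) :
    szB T (r • x) y N = conj r * szB T x y N := by
  simp only [szB, szA_smul_left, ← Finset.mul_sum, Complex.real_smul]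
  ring

lemma szB_add_right (T : (H →L[ℂ] H)ˣ) (x y y' : H) (N : ℕ) :
    szB T x (y + y') N = szB T x y N + szB T x y' N := by
  simp [szB, szA_add_right, Finset.sum_add_distrib, smul_add]

lemma szB_smul_right (T : (H →L[ℂ] H)ˣ) (r : ℂ) (x y : H) (N : ℕ) :
    szB T x (r • y) N = r * szB T x y N := by
  simp only [szB, szA_smul_right, ← Finset.mul_sum, Complex.real_smul]
  ring

lemma szB_conj (T : (H →L[ℂ] H)ˣ) (x y : H) (N : ℕ) :
    conj (szB T x y N) = szB T y x N := by
  simp only [szB]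
  rw [starRingEnd_apply, star_smul, star_trivial]
  congr 1
  rw [← starRingEnd_apply, map_sum]
  exact Finset.sum_congr rfl fun n _ => szA_conj T x y n

lemma szA_succ (T : (H →L[ℂ] H)ˣ) (x y : H) (n : ℕ) :
    szA T x y (n + 1) = szA T ((T : H →L[ℂ] H) x) ((T : H →L[ℂ] H) y) n := by
  have hcast : (((n + 1 : ℕ)) : ℤ) = (n : ℤ) + 1 := by push_cast; ring
  rw [szA, szA, hcast, zpow_add_one]
  simp [Units.val_mul, ContinuousLinearMap.mul_apply]

lemma szB_shift (T : (H →L[ℂ] H)ˣ) (x y : H) (N : ℕ) :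
    szB T ((T : H →L[ℂ] H) x) ((T : H →L[ℂ] H) y) N
      = szB T x y N + (N : ℝ)⁻¹ • (szA T x y N - szA T x y 0) := by
  unfold szB
  rw [← smul_add]
  congr 1
  have h1 : ∑ n ∈ Finset.range N, szA T ((T : H →L[ℂ] H) x) ((T : H →L[ℂ] H) y) n
      = ∑ n ∈ Finset.range N, szA T x y (n + 1) :=
    Finset.sum_congr rfl fun n _ => (szA_succ T x y n).symm
  have h2 := Finset.sum_range_succ' (szA T x y) N
  have h3 := Finset.sum_range_succ (szA T x y) N
  rw [h1]
  linear_combination h3 - h2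

end SzNagyAux

open SzNagyAux

/-- (Sz.-Nagy) Let `T` be a bounded invertible operator on a complex Hilbert space
`(H, h₀)` which is uniformly bounded: `‖Tᵏ‖ ≤ c` for all integers `k`. Then there
is a bounded self-adjoint operator `Q` with `(1/c)·I ≤ Q ≤ c·I` such that `T` is
unitary with respect to the inner ℂ product `h_T(x,y) := h₀(Qx, Qy)`, i.e.
`h₀(Q(Tx), Q(Ty)) = h₀(Qx, Qy)` (equivalently `Q T Q⁻¹` is `h₀`-unitary). -/
theorem stmt12 (H : Type*) [NormedAddCommGroup H] [InnerProductSpace ℂ H]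
    [CompleteSpace H]
    (T : (H →L[ℂ] H)ˣ) (c : ℝ) (hc : 1 ≤ c)
    (hbound : ∀ k : ℤ, ‖((T ^ k : (H →L[ℂ] H)ˣ) : H →L[ℂ] H)‖ ≤ c) :
    ∃ Q : H →L[ℂ] H, IsSelfAdjoint Q ∧
      (∀ x : H, (1 / c) * ‖x‖ ^ 2 ≤ (inner ℂ (Q x) x : ℂ).re ∧
        (inner ℂ (Q x) x : ℂ).re ≤ c * ‖x‖ ^ 2) ∧
      (∀ x y : H,
        (inner ℂ (Q ((T : H →L[ℂ] H) x)) (Q ((T : H →L[ℂ] H) y)) : ℂ) =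
          inner ℂ (Q x) (Q y)) := by
  classical
  have hc0 : (0 : ℝ) < c := lt_of_lt_of_le one_pos hc
  set φ : Ultrafilter ℕ := Filter.hyperfilter ℕ with hφdef
  have hφatTop : (φ : Filter ℕ) ≤ atTop :=
    Nat.cofinite_eq_atTop ▸ Filter.hyperfilter_le_cofinite
  -- basic norm bounds
  have hTz : ∀ (n : ℤ) (z : H), ‖((T ^ n : (H →L[ℂ] H)ˣ) : H →L[ℂ] H) z‖ ≤ c * ‖z‖ := by
    intro n z
    exact le_trans (le_opNorm _ z) (mul_le_mul_of_nonneg_right (hbound n) (norm_nonneg z))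
  have hTzlow : ∀ (n : ℤ) (z : H), ‖z‖ ≤ c * ‖((T ^ n : (H →L[ℂ] H)ˣ) : H →L[ℂ] H) z‖ := by
    intro n z
    have h1 : ((T ^ (-n) : (H →L[ℂ] H)ˣ) : H →L[ℂ] H)
        (((T ^ n : (H →L[ℂ] H)ˣ) : H →L[ℂ] H) z) = z := by
      rw [← ContinuousLinearMap.mul_apply, ← Units.val_mul, ← zpow_add T]
      simp
    conv_lhs => rw [← h1]
    exact hTz _ _
  have hA : ∀ (x y : H) (n : ℕ), ‖szA T x y n‖ ≤ c ^ 2 * ‖x‖ * ‖y‖ := by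
    intro x y n
    have h1 : ‖szA T x y n‖ ≤ ‖((T ^ (n : ℤ) : (H →L[ℂ] H)ˣ) : H →L[ℂ] H) x‖ *
        ‖((T ^ (n : ℤ) : (H →L[ℂ] H)ˣ) : H →L[ℂ] H) y‖ := norm_inner_le_norm _ _
    have h2 : ‖((T ^ (n : ℤ) : (H →L[ℂ] H)ˣ) : H →L[ℂ] H) x‖ *
        ‖((T ^ (n : ℤ) : (H →L[ℂ] H)ˣ) : H →L[ℂ] H) y‖ ≤ (c * ‖x‖) * (c * ‖y‖) :=
      mul_le_mul (hTz _ _) (hTz _ _) (norm_nonneg _) (by positivity)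
    have h3 : (c * ‖x‖) * (c * ‖y‖) = c ^ 2 * ‖x‖ * ‖y‖ := by ring
    linarith
  have hB : ∀ (x y : H) (N : ℕ), ‖szB T x y N‖ ≤ c ^ 2 * ‖x‖ * ‖y‖ := by
    intro x y N
    have hM : (0:ℝ) ≤ c ^ 2 * ‖x‖ * ‖y‖ := by positivity
    rcases Nat.eq_zero_or_pos N with h | h
    · simp [szB, h, hM]
    · have hN : (0:ℝ) < (N:ℝ) := by exact_mod_cast h
      have hsum : ‖∑ n ∈ Finset.range N, szA T x y n‖ ≤ (N : ℝ) * (c ^ 2 * ‖x‖ * ‖y‖) := by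
        refine le_trans (norm_sum_le _ _) ?_
        refine le_trans (Finset.sum_le_sum fun n _ => hA x y n) ?_
        rw [Finset.sum_const, Finset.card_range, nsmul_eq_mul]
      have heq : ‖szB T x y N‖ = (N : ℝ)⁻¹ * ‖∑ n ∈ Finset.range N, szA T x y n‖ := by
        rw [szB, norm_smul, Real.norm_eq_abs, abs_of_nonneg (by positivity)]
      rw [heq]
      have h5 := mul_le_mul_of_nonneg_left hsum (inv_nonneg.mpr hN.le)
      refine le_trans h5 (le_of_eq ?_)
      field_simp
  -- the limit functional
  have exL : ∀ x y : H, ∃ z : ℂ, Tendsto (szB T x y) (φ : Filter ℕ) (𝓝 z) := by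
    intro x y
    obtain ⟨z, -, hz⟩ := (isCompact_closedBall (0 : ℂ) (c ^ 2 * ‖x‖ * ‖y‖)).ultrafilter_le_nhds
      (φ.map (szB T x y)) (by
        rw [Ultrafilter.coe_map, Filter.le_principal_iff, Filter.mem_map]
        refine Filter.univ_mem' fun N => ?_
        simpa [mem_closedBall_zero_iff] using hB x y N)
    exact ⟨z, by rwa [Ultrafilter.coe_map] at hz⟩
  set L : H → H → ℂ := fun x y => (exL x y).choose with hLdef
  have hL : ∀ x y : H, Tendsto (szB T x y) (φ : Filter ℕ) (𝓝 (L x y)) :=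
    fun x y => (exL x y).choose_spec
  have huniq : ∀ (x y : H) (z : ℂ), Tendsto (szB T x y) (φ : Filter ℕ) (𝓝 z) → L x y = z :=
    fun x y z h => tendsto_nhds_unique (hL x y) h
  -- properties of L
  have hLadd₁ : ∀ x x' y : H, L (x + x') y = L x y + L x' y := by
    intro x x' y
    refine huniq _ _ _ ?_
    have := (hL x y).add (hL x' y)
    exact this.congr fun N => (szB_add_left T x x' y N).symm
  have hLsmul₁ : ∀ (r : ℂ) (x y : H), L (r • x) y = conj r * L x y := by
    intro r x y
    refine huniq _ _ _ ?_
    have := (hL x y).const_mul (conj r)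
    exact this.congr fun N => (szB_smul_left T r x y N).symm
  have hLadd₂ : ∀ x y y' : H, L x (y + y') = L x y + L x y' := by
    intro x y y'
    refine huniq _ _ _ ?_
    have := (hL x y).add (hL x y')
    exact this.congr fun N => (szB_add_right T x y y' N).symm
  have hLsmul₂ : ∀ (r : ℂ) (x y : H), L x (r • y) = r * L x y := by
    intro r x y
    refine huniq _ _ _ ?_
    have := (hL x y).const_mul r
    exact this.congr fun N => (szB_smul_right T r x y N).symm
  have hLconj : ∀ x y : H, conj (L x y) = L y x := by
    intro x y
    refine (huniq _ _ _ ?_).symm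
    have := (hL x y).star
    exact this.congr fun N => (szB_conj T x y N)
  have hLbound : ∀ x y : H, ‖L x y‖ ≤ c ^ 2 * ‖x‖ * ‖y‖ := by
    intro x y
    exact le_of_tendsto (hL x y).norm (Filter.Eventually.of_forall fun N => hB x y N)
  have hLre : ∀ x : H, (1 / c ^ 2) * ‖x‖ ^ 2 ≤ (L x x).re := by
    intro x
    refine ge_of_tendsto ((Complex.continuous_re.tendsto _).comp (hL x x)) ?_
    refine Filter.Eventually.filter_mono hφatTop ?_
    rw [eventually_atTop]
    refine ⟨1, fun N hN => ?_⟩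
    simp only [Function.comp_apply]
    have hN0 : (0:ℝ) < (N:ℝ) := by exact_mod_cast hN
    have hterm : ∀ n : ℕ, (1 / c ^ 2) * ‖x‖ ^ 2 ≤ (szA T x x n).re := by
      intro n
      have h1 : (szA T x x n).re
          = ‖((T ^ (n : ℤ) : (H →L[ℂ] H)ˣ) : H →L[ℂ] H) x‖ ^ 2 := by
        rw [szA]
        exact inner_self_eq_norm_sq (𝕜 := ℂ) _
      rw [h1]
      have h2 := hTzlow (n : ℤ) x
      have h3 : ‖x‖ ^ 2 ≤ c ^ 2 * ‖((T ^ (n : ℤ) : (H →L[ℂ] H)ˣ) : H →L[ℂ] H) x‖ ^ 2 := by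
        nlinarith [norm_nonneg x, norm_nonneg (((T ^ (n : ℤ) : (H →L[ℂ] H)ˣ) : H →L[ℂ] H) x)]
      rw [div_mul_eq_mul_div, div_le_iff₀ (by positivity)]
      linarith [h3]
    have hre : (szB T x x N).re
        = (N : ℝ)⁻¹ * ∑ n ∈ Finset.range N, (szA T x x n).re := by
      rw [szB, Complex.real_smul, Complex.re_ofReal_mul, Complex.re_sum]
    rw [hre]
    have hsum : (N : ℝ) * ((1 / c ^ 2) * ‖x‖ ^ 2) ≤ ∑ n ∈ Finset.range N, (szA T x x n).re := by
      have e1 : (N : ℝ) * ((1 / c ^ 2) * ‖x‖ ^ 2)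
          = ∑ _n ∈ Finset.range N, ((1 / c ^ 2) * ‖x‖ ^ 2) := by
        rw [Finset.sum_const, Finset.card_range, nsmul_eq_mul]
      rw [e1]
      exact Finset.sum_le_sum fun n _ => hterm n
    have e2 : (1 / c ^ 2) * ‖x‖ ^ 2 = (N : ℝ)⁻¹ * ((N : ℝ) * ((1 / c ^ 2) * ‖x‖ ^ 2)) := by
      field_simp
    rw [e2]
    exact mul_le_mul_of_nonneg_left hsum (by positivity)
  have hLinv : ∀ x y : H, L ((T : H →L[ℂ] H) x) ((T : H →L[ℂ] H) y) = L x y := by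
    intro x y
    refine huniq _ _ _ ?_
    have hdiff : Tendsto (fun N : ℕ => (N : ℝ)⁻¹ • (szA T x y N - szA T x y 0))
        (φ : Filter ℕ) (𝓝 0) := by
      refine Tendsto.mono_left ?_ hφatTop
      have hg : Tendsto (fun N : ℕ => (N : ℝ)⁻¹ * (2 * (c ^ 2 * ‖x‖ * ‖y‖))) atTop (𝓝 0) := by
        have := tendsto_inv_atTop_nhds_zero_nat.mul_const (2 * (c ^ 2 * ‖x‖ * ‖y‖))
        simpa using this
      refine squeeze_zero_norm (fun N => ?_) hg
      have e1 : ‖(N : ℝ)⁻¹ • (szA T x y N - szA T x y 0)‖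
          = (N : ℝ)⁻¹ * ‖szA T x y N - szA T x y 0‖ := by
        rw [norm_smul, Real.norm_eq_abs, abs_of_nonneg (by positivity)]
      rw [e1]
      refine mul_le_mul_of_nonneg_left ?_ (by positivity)
      have e2 : ‖szA T x y N - szA T x y 0‖ ≤ ‖szA T x y N‖ + ‖szA T x y 0‖ := norm_sub_le _ _
      linarith [hA x y N, hA x y 0]
    have := (hL x y).add hdiff
    rw [add_zero] at this
    exact this.congr fun N => (szB_shift T x y N).symm
  -- the operator S
  let B₀ : H →ₗ⋆[ℂ] H →ₗ[ℂ] ℂ :=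
    LinearMap.mk₂'ₛₗ (starRingEnd ℂ) (RingHom.id ℂ) L hLadd₁
      (fun r x y => by simpa [smul_eq_mul] using hLsmul₁ r x y) hLadd₂
      (fun r x y => by simpa [smul_eq_mul] using hLsmul₂ r x y)
  let B : H →L⋆[ℂ] H →L[ℂ] ℂ :=
    LinearMap.mkContinuous₂ B₀ (c ^ 2) (fun x y => by
      exact hLbound x y)
  set S : H →L[ℂ] H := InnerProductSpace.continuousLinearMapOfBilin B with hSdef
  have hS : ∀ v w : H, (inner ℂ (S v) w : ℂ) = L v w := fun v w =>
    InnerProductSpace.continuousLinearMapOfBilin_apply B v w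
  have hSsa : IsSelfAdjoint S := by
    rw [ContinuousLinearMap.isSelfAdjoint_iff_isSymmetric]
    intro v w
    have h1 : (inner ℂ v (S w) : ℂ) = conj (inner ℂ (S w) v : ℂ) := (inner_conj_symm _ _).symm
    simp only [ContinuousLinearMap.coe_coe]
    rw [hS, h1, hS, hLconj]
  have hSnorm : ‖S‖ ≤ c ^ 2 := by
    refine ContinuousLinearMap.opNorm_le_bound S (by positivity) fun x => ?_
    rcases eq_or_lt_of_le (norm_nonneg (S x)) with h0 | h0
    · rw [← h0]; positivity
    · have h1 : ‖S x‖ * ‖S x‖ ≤ (c ^ 2 * ‖x‖) * ‖S x‖ := by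
        have h2 : (‖S x‖ : ℝ) ^ 2 = RCLike.re (inner ℂ (S x) (S x) : ℂ) :=
          (inner_self_eq_norm_sq (𝕜 := ℂ) (S x)).symm
        have h3 : RCLike.re (inner ℂ (S x) (S x) : ℂ) ≤ ‖(inner ℂ (S x) (S x) : ℂ)‖ :=
          RCLike.re_le_norm _
        have h4 : ‖(inner ℂ (S x) (S x) : ℂ)‖ = ‖L x (S x)‖ := by rw [hS]
        have h5 := hLbound x (S x)
        have e1 : ‖S x‖ * ‖S x‖ = ‖S x‖ ^ 2 := by ring
        rw [h4] at h3
        nlinarith [h2, h3, h5]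
      exact le_of_mul_le_mul_right h1 h0
  -- spectrum bound for S
  have halg : ∀ (r : ℝ) (x : H), (algebraMap ℝ (H →L[ℂ] H) r) x = (r : ℂ) • x := by
    intro r x
    rw [Algebra.algebraMap_eq_smul_one]
    simp [Complex.coe_smul]
  have hsub_sa : IsSelfAdjoint (S - algebraMap ℝ (H →L[ℂ] H) (1 / c ^ 2)) := by
    exact hSsa.sub (IsSelfAdjoint.algebraMap (H →L[ℂ] H) (star_trivial _))
  have hSpos : 0 ≤ S - algebraMap ℝ (H →L[ℂ] H) (1 / c ^ 2) := by
    rw [ContinuousLinearMap.nonneg_iff_isPositive]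
    refine ⟨ContinuousLinearMap.isSelfAdjoint_iff_isSymmetric.mp hsub_sa, fun x => ?_⟩
    have h1 : (S - algebraMap ℝ (H →L[ℂ] H) (1 / c ^ 2)) x
        = S x - ((1 / c ^ 2 : ℝ) : ℂ) • x := by
      rw [ContinuousLinearMap.sub_apply, halg]
    rw [ContinuousLinearMap.reApplyInnerSelf, h1, inner_sub_left, inner_smul_left, map_sub]
    have h2 : RCLike.re ((starRingEnd ℂ) ((1 / c ^ 2 : ℝ) : ℂ) * (inner ℂ x x : ℂ))
        = (1 / c ^ 2) * ‖x‖ ^ 2 := by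
      rw [Complex.conj_ofReal]
      have := inner_self_eq_norm_sq (𝕜 := ℂ) x
      rw [RCLike.re_to_complex] at this ⊢
      rw [Complex.re_ofReal_mul, this]
    rw [h2]
    have h3 : (1 / c ^ 2) * ‖x‖ ^ 2 ≤ RCLike.re (inner ℂ (S x) x : ℂ) := by
      rw [hS, RCLike.re_to_complex]
      exact hLre x
    linarith
  have hspecS : ∀ t ∈ spectrum ℝ S, 1 / c ^ 2 ≤ t := by
    intro t ht
    have hmem : t - 1 / c ^ 2 ∈ spectrum ℝ (S - algebraMap ℝ (H →L[ℂ] H) (1 / c ^ 2)) := by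
      rw [← spectrum.sub_singleton_eq]
      exact Set.sub_mem_sub ht rfl
    have h1 := (StarOrderedRing.nonneg_iff_spectrum_nonneg (R := ℝ) _ hsub_sa).mp hSpos
      _ hmem
    linarith
  have hspecS0 : ∀ t ∈ spectrum ℝ S, 0 ≤ t := fun t ht =>
    le_trans (by positivity) (hspecS t ht)
  -- Q = sqrt S
  set Q : H →L[ℂ] H := cfc Real.sqrt S with hQdef
  have hQsa : IsSelfAdjoint Q := cfc_predicate Real.sqrt S
  have hQsq : Q ^ 2 = S := by
    have h1 : cfc (fun t : ℝ => Real.sqrt t ^ 2) S = Q ^ 2 :=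
      cfc_pow Real.sqrt 2 S (Real.continuous_sqrt.continuousOn) hSsa
    have h2 : cfc (fun t : ℝ => Real.sqrt t ^ 2) S = cfc (id : ℝ → ℝ) S :=
      cfc_congr fun t ht => Real.sq_sqrt (hspecS0 t ht)
    rw [← h1, h2, cfc_id ℝ S hSsa]
  have hQlow : 0 ≤ Q - algebraMap ℝ (H →L[ℂ] H) (1 / c) := by
    have h1 : Q - algebraMap ℝ (H →L[ℂ] H) (1 / c)
        = cfc (fun t : ℝ => Real.sqrt t - 1 / c) S := by
      rw [cfc_sub Real.sqrt (fun _ => 1 / c) S (Real.continuous_sqrt.continuousOn)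
        (continuousOn_const), cfc_const (1 / c) S hSsa]
    rw [h1]
    refine cfc_nonneg fun t ht => ?_
    have h2 := hspecS t ht
    have h3 : (1 / c) ^ 2 ≤ t := by rw [div_pow, one_pow]; exact h2
    have h4 : (1 / c : ℝ) ≤ Real.sqrt t := by
      calc (1 / c : ℝ) = Real.sqrt ((1 / c) ^ 2) := (Real.sqrt_sq (by positivity)).symm
      _ ≤ Real.sqrt t := Real.sqrt_le_sqrt h3
    linarith
  have hQnorm : ‖Q‖ ≤ c := by
    have h1 : ‖star Q * Q‖ = ‖Q‖ * ‖Q‖ := CStarRing.norm_star_mul_self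
    rw [hQsa.star_eq, ← sq, hQsq] at h1
    have h2 : ‖Q‖ * ‖Q‖ ≤ c ^ 2 := h1 ▸ hSnorm
    nlinarith [norm_nonneg Q]
  refine ⟨Q, hQsa, fun x => ⟨?_, ?_⟩, ?_⟩
  · -- lower bound
    have hpos := (ContinuousLinearMap.nonneg_iff_isPositive _).mp hQlow
    have h1 := hpos.inner_nonneg_left x
    rw [ContinuousLinearMap.sub_apply, halg, inner_sub_left, inner_smul_left] at h1
    replace h1 := (RCLike.nonneg_iff.mp h1).1
    rw [map_sub] at h1
    have h2 : RCLike.re ((starRingEnd ℂ) ((1 / c : ℝ) : ℂ) * (inner ℂ x x : ℂ))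
        = (1 / c) * ‖x‖ ^ 2 := by
      rw [Complex.conj_ofReal]
      have := inner_self_eq_norm_sq (𝕜 := ℂ) x
      rw [RCLike.re_to_complex] at this ⊢
      rw [Complex.re_ofReal_mul, this]
    rw [h2] at h1
    have : RCLike.re (inner ℂ (Q x) x : ℂ) = (inner ℂ (Q x) x : ℂ).re := RCLike.re_to_complex
    linarith [h1, this.symm.le, this.le]
  · -- upper bound
    have e1 : (inner ℂ (Q x) x : ℂ).re ≤ ‖(inner ℂ (Q x) x : ℂ)‖ := Complex.re_le_norm _
    have e2 : ‖(inner ℂ (Q x) x : ℂ)‖ ≤ ‖Q x‖ * ‖x‖ := norm_inner_le_norm _ _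
    have e3 : ‖Q x‖ ≤ ‖Q‖ * ‖x‖ := Q.le_opNorm x
    nlinarith [norm_nonneg x, norm_nonneg (Q x), hQnorm, norm_nonneg Q]
  · -- unitarity
    have hQQ : ∀ a b : H, (inner ℂ (Q a) (Q b) : ℂ) = L a b := by
      intro a b
      have hsym := ContinuousLinearMap.isSelfAdjoint_iff_isSymmetric.mp hQsa
      have h1 : (inner ℂ (Q a) (Q b) : ℂ) = inner ℂ a (Q (Q b)) := hsym a (Q b)
      have h2 : Q (Q b) = S b := by
        rw [← ContinuousLinearMap.mul_apply, ← sq, hQsq]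
      rw [h1, h2]
      calc (inner ℂ a (S b) : ℂ) = conj (inner ℂ (S b) a : ℂ) := (inner_conj_symm _ _).symm
      _ = conj (L b a) := by rw [hS]
      _ = L a b := hLconj b a
    intro x y
    rw [hQQ, hQQ, hLinv]
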